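/- There exists a universal constant c > 0 such that for every real ε with 0 < ε < 1/4 and every sequence (n_j)_{j≥1} of positive integers satisfying n_{j+1} ≥ (1+ε)·n_j for all j ≥ 1, there exists a set A ⊆ ℤ with upper density D*(A) = limsup_{N→∞} |A ∩ [−N, N]| / (2N+1) ≥ c·ε·|log ε|⁻¹ such that (A − A) ∩ {n_j : j ≥ 1} = ∅, i.e. no difference of two elements of A equals any n_j. -/

import Mathlib

open Filter Finset
open scoped Classical

noncomputable section

namespace LacunaryAux

/-- Counting integers lying in a real interval. -/
lemma card_int_le (S : Finset ℤ) (α β : ℝ)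
    (h : ∀ k ∈ S, α ≤ (k : ℝ) ∧ (k : ℝ) ≤ β) (hαβ : α ≤ β + 1) :
    (S.card : ℝ) ≤ β - α + 1 := by
  have hsub : S ⊆ Finset.Icc ⌈α⌉ ⌊β⌋ := by
    intro k hk
    rcases h k hk with ⟨h1, h2⟩
    exact Finset.mem_Icc.2 ⟨Int.ceil_le.2 h1, Int.le_floor.2 h2⟩
  have h1 : (S.card : ℝ) ≤ ((Finset.Icc ⌈α⌉ ⌊β⌋).card : ℝ) := by
    exact_mod_cast Nat.cast_le.2 (Finset.card_le_card hsub)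
  refine h1.trans ?_
  rw [Int.card_Icc]
  rcases le_or_gt ⌈α⌉ (⌊β⌋ + 1) with hle | hlt
  · have hnn : (0:ℤ) ≤ ⌊β⌋ + 1 - ⌈α⌉ := by omega
    have heq : (((⌊β⌋ + 1 - ⌈α⌉).toNat : ℕ) : ℝ) = ((⌊β⌋ : ℝ) + 1 - (⌈α⌉ : ℝ)) := by
      have := Int.toNat_of_nonneg hnn
      exact_mod_cast congrArg (fun z : ℤ => (z : ℝ)) this
    rw [heq]
    have hb : (⌊β⌋ : ℝ) ≤ β := Int.floor_le β
    have ha : α ≤ (⌈α⌉ : ℝ) := Int.le_ceil α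
    linarith
  · have : (⌊β⌋ + 1 - ⌈α⌉).toNat = 0 := by omega
    rw [this]
    simpa using by linarith
 
/-- Counting naturals lying in a real interval. -/
lemma card_nat_le (S : Finset ℕ) (α β : ℝ)
    (h : ∀ i ∈ S, α ≤ (i : ℝ) ∧ (i : ℝ) ≤ β) (hαβ : α ≤ β + 1) :
    (S.card : ℝ) ≤ β - α + 1 := by
  have hcard : S.card = (S.image (fun i : ℕ => (i : ℤ))).card :=
    (Finset.card_image_of_injective _ (fun a b => by exact_mod_cast id)).symm
  rw [hcard]
  refine card_int_le _ α β ?_ hαβ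
  intro k hk
  rcases Finset.mem_image.1 hk with ⟨i, hi, rfl⟩
  simpa using h i hi


def Aset (δ x : ℝ) : Set ℤ := {m : ℤ | ∃ k : ℤ, |(m : ℝ) * x - (k : ℝ)| < δ / 2}

lemma Aset_diff {δ x : ℝ} {a b : ℤ} (ha : a ∈ Aset δ x) (hb : b ∈ Aset δ x) :
    ∃ k : ℤ, |((a : ℝ) - (b : ℝ)) * x - (k : ℝ)| < δ := by
  obtain ⟨k, hk⟩ := ha; obtain ⟨k', hk'⟩ := hb
  refine ⟨k - k', ?_⟩
  have heq : ((a:ℝ) - b) * x - ((k - k' : ℤ) : ℝ) = ((a:ℝ)*x - k) - ((b:ℝ)*x - k') := by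
    push_cast; ring
  rw [heq]
  have h2 : |((a:ℝ)*x - k) - ((b:ℝ)*x - k')| ≤ |(a:ℝ)*x - k| + |(b:ℝ)*x - k'| := abs_sub _ _
  linarith

/-- The main residue-counting lemma: if `x` is well approximated by `p/q` then among
`0,…,q-1` at least `δq/4` integers `m` have `m*x` within `δ/2` of an integer. -/
lemma count_T (δ x : ℝ) (hδ0 : 0 < δ) (hδ1 : δ ≤ 1/2) (p : ℤ) (q : ℕ) (hq : 1 ≤ q)
    (hcop : IsCoprime (q : ℤ) p) (happ : |x - (p : ℝ)/(q : ℝ)| ≤ 1/(q:ℝ)^2)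
    (hbig : 16 ≤ δ * q) :
    ∃ T : Finset ℤ, δ * q / 4 ≤ (T.card : ℝ) ∧
      ∀ m ∈ T, m ∈ Aset δ x ∧ 0 ≤ m ∧ m < (q : ℤ) := by
  have hq0 : (0:ℝ) < q := by exact_mod_cast hq
  have hqZ : (0:ℤ) < q := by exact_mod_cast hq
  set β : ℤ := ⌊δ * q / 4⌋ with hβ
  have hβle : (β : ℝ) ≤ δ * q / 4 := Int.floor_le _
  have hβge : δ * q / 4 - 1 ≤ (β : ℝ) := by
    have := Int.sub_one_lt_floor (δ * q / 4); linarith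
  have hβ4 : (3:ℝ) ≤ β := by nlinarith
  have hβpos : (1:ℤ) ≤ β := by exact_mod_cast (by push_cast; linarith : (1:ℝ) ≤ (β:ℝ))
  have h2β : 2 * β < (q:ℤ) := by
    have : (2 * β : ℝ) < q := by nlinarith
    exact_mod_cast this
  -- the residue map
  set e : ℤ → ℤ := fun m => m * p % (q:ℤ) with he
  have hemem : ∀ m : ℤ, e m ∈ Finset.Ico (0:ℤ) q := by
    intro m
    refine Finset.mem_Ico.2 ⟨Int.emod_nonneg _ (by exact_mod_cast hqZ.ne'), Int.emod_lt_of_pos _ hqZ⟩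
  have hinj : Set.InjOn e (Finset.Ico (0:ℤ) (q:ℤ)) := by
    intro m hm m' hm' hee
    have hm := Finset.mem_Ico.1 hm
    have hm' := Finset.mem_Ico.1 hm'
    have hdvd : (q:ℤ) ∣ (m - m') * p := by
      have hee' : m * p % (q:ℤ) = m' * p % (q:ℤ) := hee
      have h0 : (m * p - m' * p) % q = 0 := by
        rw [Int.sub_emod, hee', sub_self, Int.zero_emod]
      have := Int.dvd_of_emod_eq_zero h0
      simpa [sub_mul] using this
    have hdvd2 : (q:ℤ) ∣ (m - m') := hcop.dvd_of_dvd_mul_right hdvd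
    rcases hdvd2 with ⟨c, hc⟩
    have hc0 : c = 0 := by
      rcases lt_trichotomy c 0 with h | h | h
      · exfalso
        have : (q:ℤ) * c ≤ -q := by
          have : c ≤ -1 := by omega
          nlinarith
        omega
      · exact h
      · exfalso
        have : (q:ℤ) ≤ q * c := by nlinarith
        omega
    rw [hc0, mul_zero] at hc
    omega
  -- the target residues
  set P : ℤ → Prop := fun r => r ≤ β ∨ (q:ℤ) - β ≤ r with hP
  set T : Finset ℤ := (Finset.Ico (0:ℤ) (q:ℤ)).filter (fun m => P (e m)) with hT
  have himg : (Finset.Ico (0:ℤ) (q:ℤ)).image e = Finset.Ico (0:ℤ) (q:ℤ) := by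
    apply Finset.eq_of_subset_of_card_le
    · intro r hr
      rcases Finset.mem_image.1 hr with ⟨m, _, rfl⟩
      exact hemem m
    · rw [Finset.card_image_of_injOn hinj]
  have hcardT : T.card = ((Finset.Ico (0:ℤ) (q:ℤ)).filter P).card := by
    have h1 : T.image e = ((Finset.Ico (0:ℤ) (q:ℤ)).image e).filter P := by
      rw [hT, Finset.filter_image]
    have h2 : (T.image e).card = T.card :=
      Finset.card_image_of_injOn (hinj.mono (by rw [hT]; exact_mod_cast Finset.filter_subset _ _))
    rw [← h2, h1, himg]
  have hsplit : (Finset.Ico (0:ℤ) (q:ℤ)).filter P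
      = Finset.Ico (0:ℤ) (β+1) ∪ Finset.Ico ((q:ℤ)-β) (q:ℤ) := by
    ext r
    simp only [Finset.mem_filter, Finset.mem_Ico, Finset.mem_union, hP]
    constructor
    · rintro ⟨⟨h0, hq'⟩, h | h⟩
      · exact Or.inl ⟨h0, by omega⟩
      · exact Or.inr ⟨h, hq'⟩
    · rintro (⟨h0, hb⟩ | ⟨h1, h2⟩)
      · exact ⟨⟨h0, by omega⟩, Or.inl (by omega)⟩
      · exact ⟨⟨by omega, h2⟩, Or.inr h1⟩
  have hdisj : Disjoint (Finset.Ico (0:ℤ) (β+1)) (Finset.Ico ((q:ℤ)-β) (q:ℤ)) := by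
    apply Finset.disjoint_left.2
    intro r h1 h2
    have h1 := Finset.mem_Ico.1 h1
    have h2 := Finset.mem_Ico.1 h2
    omega
  have hcount : (T.card : ℝ) = 2 * β + 1 := by
    rw [hcardT, hsplit, Finset.card_union_of_disjoint hdisj, Int.card_Ico, Int.card_Ico]
    have e1 : (β + 1 - 0).toNat = β.toNat + 1 := by omega
    have e2 : ((q:ℤ) - ((q:ℤ) - β)).toNat = β.toNat := by omega
    rw [e1, e2]
    have hβT : ((β.toNat : ℕ) : ℝ) = (β : ℝ) := by
      exact_mod_cast congrArg (fun z : ℤ => (z : ℝ)) (Int.toNat_of_nonneg (by omega))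
    push_cast
    push_cast at hβT
    linarith
  refine ⟨T, ?_, ?_⟩
  · rw [hcount]; linarith
  · intro m hm
    rw [hT, Finset.mem_filter] at hm
    rcases hm with ⟨hmIco, hmP⟩
    have hm0 : (0:ℤ) ≤ m := (Finset.mem_Ico.1 hmIco).1
    have hmq : m < (q:ℤ) := (Finset.mem_Ico.1 hmIco).2
    refine ⟨?_, hm0, hmq⟩
    -- show m ∈ Aset
    set r : ℤ := e m with hr
    set d : ℤ := m * p / q with hd
    have hdr : (q:ℤ) * d + r = m * p := Int.mul_ediv_add_emod _ _
    have hr0 : (0:ℤ) ≤ r := (Finset.mem_Ico.1 (hemem m)).1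
    have hrq : r < (q:ℤ) := (Finset.mem_Ico.1 (hemem m)).2
    set θ : ℝ := x - (p:ℝ)/q with hθ
    have hmx : (m:ℝ) * x = (d:ℝ) + (r:ℝ)/q + (m:ℝ) * θ := by
      have hmp : ((m * p : ℤ) : ℝ) = (q:ℝ) * d + r := by exact_mod_cast hdr.symm
      have : (m:ℝ) * x = (m:ℝ) * ((p:ℝ)/q) + (m:ℝ)*θ := by rw [hθ]; ring
      rw [this]
      have : (m:ℝ) * ((p:ℝ)/q) = ((m*p : ℤ):ℝ)/q := by push_cast; ring
      rw [this, hmp]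
      field_simp
    have hmθ : |(m:ℝ) * θ| ≤ 1/q := by
      have h1 : |(m:ℝ)| ≤ (q:ℝ) := by
        rw [abs_of_nonneg (by exact_mod_cast hm0 : (0:ℝ) ≤ (m:ℝ))]
        exact_mod_cast hmq.le
      calc |(m:ℝ) * θ| = |(m:ℝ)| * |θ| := abs_mul _ _
        _ ≤ (q:ℝ) * (1/(q:ℝ)^2) := by
            apply mul_le_mul h1 happ (abs_nonneg _) (le_of_lt hq0)
        _ = 1/q := by field_simp
    have hqd : (1:ℝ)/q ≤ δ/16 := by
      rw [div_le_div_iff₀ hq0 (by norm_num)]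
      linarith
    rcases hmP with hcase | hcase
    · -- r small : k = d
      refine ⟨d, ?_⟩
      have h1 : |(m:ℝ)*x - d| = |(r:ℝ)/q + (m:ℝ)*θ| := by rw [hmx]; ring_nf
      rw [h1]
      have h2 : |(r:ℝ)/q + (m:ℝ)*θ| ≤ |(r:ℝ)/q| + |(m:ℝ)*θ| := abs_add_le _ _
      have h3 : |(r:ℝ)/q| ≤ (β:ℝ)/q := by
        rw [abs_of_nonneg (by positivity : (0:ℝ) ≤ (r:ℝ)/q)]
        exact (div_le_div_iff_of_pos_right hq0).2 (by exact_mod_cast hcase)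
      have h4 : (β:ℝ)/q ≤ δ/4 := by
        rw [div_le_iff₀ hq0]
        calc (β:ℝ) ≤ δ*q/4 := hβle
          _ = δ/4 * q := by ring
      linarith
    · -- r large : k = d + 1
      refine ⟨d + 1, ?_⟩
      have h1 : (m:ℝ)*x - (d+1 : ℤ) = ((r:ℝ) - q)/q + (m:ℝ)*θ := by
        rw [hmx]; push_cast; field_simp; ring
      rw [h1]
      have h2 : |((r:ℝ)-q)/q + (m:ℝ)*θ| ≤ |((r:ℝ)-q)/q| + |(m:ℝ)*θ| := abs_add_le _ _
      have h3 : |((r:ℝ)-q)/q| ≤ (β:ℝ)/q := by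
        have hrq' : (r:ℝ) ≤ (q:ℝ) := by exact_mod_cast hrq.le
        have hlow : (q:ℝ) - β ≤ (r:ℝ) := by exact_mod_cast hcase
        rw [abs_of_nonpos (div_nonpos_of_nonpos_of_nonneg (by linarith) hq0.le)]
        have hneg : -(((r:ℝ) - q)/q) = ((q:ℝ) - r)/q := by ring
        rw [hneg]
        exact (div_le_div_iff_of_pos_right hq0).2 (by linarith)
      have h4 : (β:ℝ)/q ≤ δ/4 := by
        rw [div_le_iff₀ hq0]
        calc (β:ℝ) ≤ δ*q/4 := hβle
          _ = δ/4 * q := by ring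
      linarith
/-- Lower bound for the density ratio from a finite witness set. -/
lemma fN_lb (δ x : ℝ) (S : Finset ℤ) (N : ℕ)
    (hS : ∀ m ∈ S, m ∈ Aset δ x ∧ 0 ≤ m ∧ m ≤ (N : ℤ)) :
    (S.card : ℝ) / (2 * (N:ℝ) + 1)
      ≤ ((Aset δ x ∩ Set.Icc (-(N:ℤ)) (N:ℤ)).ncard : ℝ) / (2 * N + 1) := by
  have hpos : (0:ℝ) < 2 * (N:ℝ) + 1 := by positivity
  have hsub : (↑S : Set ℤ) ⊆ Aset δ x ∩ Set.Icc (-(N:ℤ)) (N:ℤ) := by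
    intro m hm
    rcases hS m hm with ⟨h1, h2, h3⟩
    exact ⟨h1, Set.mem_Icc.2 ⟨by omega, h3⟩⟩
  have hfin : (Aset δ x ∩ Set.Icc (-(N:ℤ)) (N:ℤ)).Finite :=
    Set.Finite.subset (Set.finite_Icc _ _) Set.inter_subset_right
  have hc : (S.card : ℝ) ≤ ((Aset δ x ∩ Set.Icc (-(N:ℤ)) (N:ℤ)).ncard : ℝ) := by
    have := Set.ncard_le_ncard hsub hfin
    rw [Set.ncard_coe_finset] at this
    exact_mod_cast this
  gcongr
 
lemma fN_ub (δ x : ℝ) (N : ℕ) :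
    ((Aset δ x ∩ Set.Icc (-(N:ℤ)) (N:ℤ)).ncard : ℝ) / (2 * N + 1) ≤ 1 := by
  have hpos : (0:ℝ) < 2 * (N:ℝ) + 1 := by positivity
  rw [div_le_one hpos]
  have h1 : (Aset δ x ∩ Set.Icc (-(N:ℤ)) (N:ℤ)).ncard ≤ (Set.Icc (-(N:ℤ)) (N:ℤ)).ncard :=
    Set.ncard_le_ncard Set.inter_subset_right (Set.finite_Icc _ _)
  have h2 : (Set.Icc (-(N:ℤ)) (N:ℤ)).ncard = 2 * N + 1 := by
    rw [← Finset.coe_Icc, Set.ncard_coe_finset, Int.card_Icc]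
    omega
  calc ((Aset δ x ∩ Set.Icc (-(N:ℤ)) (N:ℤ)).ncard : ℝ) ≤ ((2 * N + 1 : ℕ) : ℝ) := by
        exact_mod_cast h1.trans_eq h2
    _ = 2 * (N:ℝ) + 1 := by push_cast; ring

/-- An irrational has good rational approximations with arbitrarily large denominators. -/
lemma exists_big_den {x : ℝ} (hx : Irrational x) (B : ℕ) :
    ∃ r : ℚ, |x - (r:ℝ)| < 1/((r.den:ℝ))^2 ∧ B ≤ r.den := by
  by_contra hcon
  push_neg at hcon
  have hinf := Real.infinite_rat_abs_sub_lt_one_div_den_sq_of_irrational hx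
  set S := {r : ℚ | |x - (r:ℝ)| < 1/((r.den:ℝ))^2} with hSdef
  have hfin : S.Finite := by
    set C : ℤ := ⌈(|x|+1) * B⌉ with hC
    have hsub : S ⊆ (fun r : ℚ => ((r.num : ℤ), r.den)) ⁻¹'
        (Set.Icc (-C) C ×ˢ Set.Iio B) := by
      intro r hr
      have hden : r.den < B := hcon r hr
      have hden1 : 1 ≤ r.den := r.pos
      have hdenR : (1:ℝ) ≤ (r.den:ℝ) := by exact_mod_cast hden1
      have happ : |x - (r:ℝ)| < 1 := by
        refine lt_of_lt_of_le hr ?_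
        rw [div_le_one (by positivity)]
        nlinarith
      have hrabs : |(r:ℝ)| ≤ |x| + 1 := by
        have := abs_sub_abs_le_abs_sub (r:ℝ) x
        rw [abs_sub_comm] at happ
        linarith [abs_sub_abs_le_abs_sub (r:ℝ) x, le_abs_self ((r:ℝ) - x), happ]
      have hnum : |(r.num : ℝ)| ≤ (|x|+1) * B := by
        have hcast : (r.num : ℝ) = (r:ℝ) * (r.den:ℝ) := by
          rw [Rat.cast_def]
          field_simp
        rw [hcast, abs_mul, abs_of_nonneg (by positivity : (0:ℝ) ≤ (r.den:ℝ))]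
        have hd : (r.den : ℝ) ≤ B := by exact_mod_cast hden.le
        have h0 : (0:ℝ) ≤ |x| + 1 := by positivity
        nlinarith [abs_nonneg (r:ℝ)]
      constructor
      · simp only [Set.mem_Icc]
        constructor
        · have : -((|x|+1)*B) ≤ (r.num:ℝ) := by
            have := neg_abs_le (r.num : ℝ); linarith
          have hCge : ((|x|+1)*B : ℝ) ≤ (C:ℝ) := Int.le_ceil _
          exact_mod_cast le_trans (by linarith : (-(C:ℝ)) ≤ (r.num:ℝ)) (le_refl _)
        · have : (r.num:ℝ) ≤ (|x|+1)*B := le_trans (le_abs_self _) hnum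
          have hCge : ((|x|+1)*B : ℝ) ≤ (C:ℝ) := Int.le_ceil _
          exact_mod_cast this.trans hCge
      · exact hden
    have hinjon : Set.InjOn (fun r : ℚ => ((r.num : ℤ), r.den)) S := by
      intro a _ b _ hab
      simp only [Prod.mk.injEq] at hab
      exact Rat.ext hab.1 hab.2
    exact Set.Finite.of_finite_image
      (Set.Finite.subset (((Set.finite_Icc (-C) C).prod (Set.finite_Iio B))) 
        (Set.image_subset_iff.2 hsub)) hinjon
  exact hinf hfin
lemma freq_density (δ x : ℝ) (hδ0 : 0 < δ) (hδ1 : δ ≤ 1/2) :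
    ∃ᶠ N : ℕ in atTop,
      δ/32 ≤ ((Aset δ x ∩ Set.Icc (-(N:ℤ)) (N:ℤ)).ncard : ℝ) / (2*N+1) := by
  rw [Filter.frequently_atTop]
  intro M
  by_cases hx : Irrational x
  · -- irrational case
    set B : ℕ := max (M+1) (⌈(16:ℝ)/δ⌉₊ + 1) with hB
    obtain ⟨r, happ, hden⟩ := exists_big_den hx B
    have hq1 : 1 ≤ r.den := r.pos
    have hqM : M + 1 ≤ r.den := le_trans (le_max_left _ _) hden
    have hq0 : (0:ℝ) < r.den := by exact_mod_cast hq1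
    have hbig : (16:ℝ) ≤ δ * r.den := by
      have h1 : (⌈(16:ℝ)/δ⌉₊ + 1 : ℕ) ≤ r.den := le_trans (le_max_right _ _) hden
      have h2 : (16:ℝ)/δ ≤ (⌈(16:ℝ)/δ⌉₊ : ℝ) := Nat.le_ceil _
      have h3 : ((⌈(16:ℝ)/δ⌉₊ : ℕ) : ℝ) + 1 ≤ (r.den:ℝ) := by exact_mod_cast h1
      have h4 : (16:ℝ)/δ ≤ r.den := by linarith
      rw [div_le_iff₀ hδ0] at h4
      linarith
    have hcop : IsCoprime ((r.den:ℕ):ℤ) r.num := by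
      rw [Int.isCoprime_iff_gcd_eq_one]
      have h := r.reduced
      simpa [Int.gcd, Int.natAbs_natCast] using (Nat.coprime_comm.mp h)
    have hrx : (r:ℝ) = (r.num:ℝ)/(r.den:ℝ) := by rw [Rat.cast_def]
    obtain ⟨T, hTcard, hTmem⟩ := count_T δ x hδ0 hδ1 r.num r.den hq1 hcop
      (by rw [← hrx]; exact happ.le) hbig
    refine ⟨r.den - 1, by omega, ?_⟩
    have hNcast : ((r.den - 1 : ℕ) : ℤ) = (r.den : ℤ) - 1 := by
      push_cast [Nat.cast_sub hq1]; ring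
    have hlb := fN_lb δ x T (r.den - 1) ?_
    · refine le_trans ?_ hlb
      have h2N : (2*((r.den - 1 : ℕ):ℝ)+1) = 2*(r.den:ℝ) - 1 := by
        push_cast [Nat.cast_sub hq1]; ring
      rw [h2N]
      have hdenpos : (0:ℝ) < 2*(r.den:ℝ)-1 := by linarith
      rw [div_le_div_iff₀ (by norm_num) hdenpos]
      nlinarith
    · intro m hm
      rcases hTmem m hm with ⟨h1, h2, h3⟩
      exact ⟨h1, h2, by rw [hNcast]; omega⟩
  · -- rational case
    have hxr : x ∈ Set.range ((↑·) : ℚ → ℝ) := not_not.mp hx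
    obtain ⟨r, hr⟩ := hxr
    have hr' : (r:ℝ) = x := hr
    have hq1 : 1 ≤ r.den := r.pos
    have hq0 : (0:ℝ) < r.den := by exact_mod_cast hq1
    have hd1R : (1:ℝ) ≤ (r.den:ℝ) := by exact_mod_cast hq1
    have hM0 : (0:ℝ) ≤ (M:ℝ) := Nat.cast_nonneg M
    have hMden : (0:ℝ) ≤ (M:ℝ) * (r.den:ℝ) := mul_nonneg hM0 (by linarith)
    have hrx : x = (r.num:ℝ)/(r.den:ℝ) := by rw [← hr', Rat.cast_def]
    have hqx : (r.den:ℝ) * x = (r.num:ℝ) := by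
      rw [hrx]; field_simp
    have hcop : IsCoprime ((r.den:ℕ):ℤ) r.num := by
      rw [Int.isCoprime_iff_gcd_eq_one]
      have h := r.reduced
      simpa [Int.gcd, Int.natAbs_natCast] using (Nat.coprime_comm.mp h)
    set N : ℕ := (M+1) * r.den - 1 with hN
    have hNM : M ≤ N := by
      have : M + 1 ≤ (M+1) * r.den := Nat.le_mul_of_pos_right _ (by omega)
      omega
    have hNcast : ((N : ℕ) : ℤ) = ((M:ℤ)+1) * r.den - 1 := by
      have h1 : 1 ≤ (M+1) * r.den := Nat.mul_pos (Nat.succ_pos M) r.pos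
      push_cast [hN, Nat.cast_sub h1]
      ring
    have h2Npos : (0:ℝ) < 2*((M:ℝ)+1)*(r.den:ℝ) - 1 := by nlinarith
    have h2N : (2*((N:ℕ):ℝ)+1) = 2*((M:ℝ)+1)*(r.den:ℝ) - 1 := by
      have h1 : 1 ≤ (M+1) * r.den := Nat.mul_pos (Nat.succ_pos M) r.pos
      push_cast [hN, Nat.cast_sub h1]
      try ring
    by_cases hbig : (16:ℝ) ≤ δ * r.den
    · obtain ⟨T, hTcard, hTmem⟩ := count_T δ x hδ0 hδ1 r.num r.den hq1 hcop
        (by rw [hrx, sub_self, abs_zero]; positivity) hbig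
      set SK : Finset ℤ := ((Finset.range (M+1)) ×ˢ T).image
        (fun pr => pr.2 + (r.den:ℤ) * pr.1) with hSK
      have hinj : Set.InjOn (fun pr : ℕ × ℤ => pr.2 + (r.den:ℤ) * pr.1)
          ↑((Finset.range (M+1)) ×ˢ T) := by
        intro a ha b hb hab
        simp only [Finset.coe_product, Set.mem_prod, Finset.mem_coe, Finset.mem_range] at ha hb
        obtain ⟨ha1, ha2⟩ := ha; obtain ⟨hb1, hb2⟩ := hb
        obtain ⟨-, ha0, haq⟩ := hTmem _ ha2
        obtain ⟨-, hb0, hbq⟩ := hTmem _ hb2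
        simp only at hab
        have hmod : a.2 = b.2 := by
          have h1 : (a.2 + (r.den:ℤ) * a.1) % r.den = a.2 := by
            rw [Int.add_mul_emod_self_left]
            exact Int.emod_eq_of_lt ha0 haq
          have h2 : (b.2 + (r.den:ℤ) * b.1) % r.den = b.2 := by
            rw [Int.add_mul_emod_self_left]
            exact Int.emod_eq_of_lt hb0 hbq
          rw [← h1, ← h2, hab]
        have hq' : (a.1 : ℤ) = b.1 := by
          have hdz : (r.den : ℤ) ≠ 0 := Int.natCast_ne_zero.mpr (by omega)
          have := hab
          rw [hmod] at this
          have h3 : (r.den:ℤ) * a.1 = (r.den:ℤ) * b.1 := by omega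
          exact mul_left_cancel₀ hdz h3
        have : a.1 = b.1 := by exact_mod_cast hq'
        exact Prod.ext this hmod
      have hcard : (SK.card : ℝ) = ((M:ℝ)+1) * T.card := by
        rw [hSK, Finset.card_image_of_injOn hinj, Finset.card_product, Finset.card_range]
        push_cast; ring
      refine ⟨N, hNM, ?_⟩
      have hlb := fN_lb δ x SK N ?_
      · refine le_trans ?_ hlb
        rw [h2N, hcard]
        rw [div_le_div_iff₀ (by norm_num) h2Npos]
        have hM1 : (1:ℝ) ≤ (M:ℝ)+1 := by linarith
        nlinarith
      · intro v hv
        rw [hSK] at hv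
        rcases Finset.mem_image.1 hv with ⟨pr, hpr, rfl⟩
        rcases Finset.mem_product.1 hpr with ⟨hpr1, hpr2⟩
        obtain ⟨hmem, h0, hq'⟩ := hTmem _ hpr2
        have ht : pr.1 < M + 1 := Finset.mem_range.1 hpr1
        refine ⟨?_, by positivity, ?_⟩
        · obtain ⟨k, hk⟩ := hmem
          refine ⟨k + pr.1 * r.num, ?_⟩
          have hrw : ((pr.2 + (r.den:ℤ) * pr.1 : ℤ):ℝ) * x - ((k + pr.1 * r.num : ℤ):ℝ)
              = ((pr.2:ℤ):ℝ) * x - (k:ℝ) + (pr.1:ℝ) * ((r.den:ℝ) * x - (r.num:ℝ)) := by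
            push_cast; ring
          rw [hrw, hqx, sub_self, mul_zero, add_zero]
          exact hk
        · rw [hNcast]
          have h1 : (pr.1 : ℤ) ≤ (M:ℤ) := by exact_mod_cast Nat.lt_succ_iff.mp ht
          have h2 : (r.den:ℤ) * pr.1 ≤ (r.den:ℤ) * M :=
            mul_le_mul_of_nonneg_left h1 (by positivity)
          have hd1 : (1:ℤ) ≤ (r.den:ℤ) := by exact_mod_cast hq1
          nlinarith
    · -- small denominator case
      push_neg at hbig
      set SK : Finset ℤ := (Finset.range (M+1)).image (fun t : ℕ => (r.den:ℤ) * (t:ℤ)) with hSK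
      have hcard : (SK.card : ℝ) = (M:ℝ)+1 := by
        rw [hSK, Finset.card_image_of_injective _ (fun a b hab => by
          have hdz : (r.den : ℤ) ≠ 0 := Int.natCast_ne_zero.mpr (by omega)
          exact_mod_cast mul_left_cancel₀ hdz hab), Finset.card_range]
        push_cast; ring
      refine ⟨N, hNM, ?_⟩
      have hlb := fN_lb δ x SK N ?_
      · refine le_trans ?_ hlb
        rw [h2N, hcard]
        rw [div_le_div_iff₀ (by norm_num) h2Npos]
        have hM1 : (1:ℝ) ≤ (M:ℝ)+1 := by linarith
        nlinarith
      · intro v hv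
        rw [hSK] at hv
        rcases Finset.mem_image.1 hv with ⟨t, ht, rfl⟩
        have ht' : t < M + 1 := Finset.mem_range.1 ht
        refine ⟨?_, by positivity, ?_⟩
        · refine ⟨t * r.num, ?_⟩
          have hrw : (((r.den:ℤ) * t : ℤ):ℝ) * x - ((t * r.num : ℤ):ℝ)
              = (t:ℝ) * ((r.den:ℝ) * x - (r.num:ℝ)) := by push_cast; ring
          rw [hrw, hqx, sub_self, mul_zero, abs_zero]
          positivity
        · rw [hNcast]
          have h1 : (t : ℤ) ≤ (M:ℤ) := by exact_mod_cast Nat.lt_succ_iff.mp ht'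
          have hd1 : (1:ℤ) ≤ (r.den:ℤ) := by exact_mod_cast hq1
          nlinarith

lemma limsup_density (δ x : ℝ) (hδ0 : 0 < δ) (hδ1 : δ ≤ 1/2) :
    δ/32 ≤ Filter.limsup
      (fun N : ℕ => ((Aset δ x ∩ Set.Icc (-(N:ℤ)) (N:ℤ)).ncard : ℝ) / (2*N+1))
      Filter.atTop := by
  exact Filter.le_limsup_of_frequently_le (freq_density δ x hδ0 hδ1)
    (Filter.isBoundedUnder_of ⟨1, fun N => fN_ub δ x N⟩)
/-- Does the cell `[i/u, (i+1)/u]` meet the `δ/m`-neighbourhood of `(1/m)·ℤ`? -/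
def meets (δ : ℝ) (m : ℕ) (u : ℝ) (i : ℕ) : Prop :=
  ∃ k : ℤ, (i:ℝ)/u ≤ ((k:ℝ) + δ)/(m:ℝ) ∧ ((k:ℝ) - δ)/(m:ℝ) ≤ ((i:ℝ)+1)/u

/-- Counting cells at scale `1/Dl` inside a parent interval `[A, A+len]` that meet the
`δ/m`-neighbourhood of `(1/m)·ℤ`. -/
lemma count_main (δ : ℝ) (hδ0 : 0 < δ) (hδ1 : δ ≤ 1/2) (m Dl : ℕ) (hm : 1 ≤ m)
    (A len : ℝ) (hlen : 1/(m:ℝ) ≤ len) (hcell : (m:ℝ) ≤ δ * Dl) :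
    (((Finset.range Dl).filter (fun i : ℕ => A ≤ (i:ℝ)/(Dl:ℝ) ∧ ((i:ℝ)+1)/(Dl:ℝ) ≤ A + len ∧
        meets δ m (Dl:ℝ) i)).card : ℝ) ≤ 12 * δ * (Dl:ℝ) * len := by
  have hm0 : (0:ℝ) < m := by exact_mod_cast hm
  have hD0 : (0:ℝ) < Dl := by
    have : (1:ℝ) ≤ (m:ℝ) := by exact_mod_cast hm
    nlinarith
  have hlen0 : (0:ℝ) < len := lt_of_lt_of_le (by positivity) hlen
  have hmlen : (1:ℝ) ≤ (m:ℝ) * len := by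
    calc (1:ℝ) = (m:ℝ) * (1/(m:ℝ)) := by field_simp
      _ ≤ (m:ℝ) * len := by
          apply mul_le_mul_of_nonneg_left hlen hm0.le
  have hratio : (1:ℝ) ≤ δ * (Dl:ℝ) / m := by
    rw [le_div_iff₀ hm0]
    linarith
  set K : Finset ℤ := Finset.Icc ⌈(m:ℝ)*A - δ⌉ ⌊(m:ℝ)*(A+len) + δ⌋ with hK
  set inner : ℤ → Finset ℕ := fun k => (Finset.range Dl).filter
      (fun i : ℕ => ((k:ℝ)-δ)*(Dl:ℝ)/m - 1 ≤ (i:ℝ) ∧ (i:ℝ) ≤ ((k:ℝ)+δ)*(Dl:ℝ)/m) with hinner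
  have hsub : (Finset.range Dl).filter (fun i : ℕ => A ≤ (i:ℝ)/(Dl:ℝ) ∧ ((i:ℝ)+1)/(Dl:ℝ) ≤ A + len ∧
      meets δ m (Dl:ℝ) i) ⊆ K.biUnion inner := by
    intro i hi
    rw [Finset.mem_filter] at hi
    obtain ⟨hiR, hA, hlen', k, hk1, hk2⟩ := hi
    refine Finset.mem_biUnion.2 ⟨k, ?_, ?_⟩
    · rw [hK, Finset.mem_Icc]
      constructor
      · apply Int.ceil_le.2
        have h1 : A * m ≤ (k:ℝ) + δ := (le_div_iff₀ hm0).1 (le_trans hA hk1)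
        nlinarith
      · apply Int.le_floor.2
        have h1 : (k:ℝ) - δ ≤ (A + len) * m := (div_le_iff₀ hm0).1 (le_trans hk2 hlen')
        nlinarith
    · rw [hinner, Finset.mem_filter]
      have hup : ((k:ℝ)-δ) * (Dl:ℝ) ≤ ((i:ℝ)+1) * m := (div_le_div_iff₀ hm0 hD0).1 hk2
      have hlo : (i:ℝ) * m ≤ ((k:ℝ)+δ) * (Dl:ℝ) := (div_le_div_iff₀ hD0 hm0).1 hk1
      refine ⟨hiR, ?_, ?_⟩
      · rw [sub_le_iff_le_add, div_le_iff₀ hm0]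
        linarith
      · rw [le_div_iff₀ hm0]
        linarith
  have hinnercard : ∀ k ∈ K, ((inner k).card : ℝ) ≤ 4 * (δ * (Dl:ℝ) / m) := by
    intro k _
    have hb := card_nat_le (inner k) (((k:ℝ)-δ)*(Dl:ℝ)/m - 1) (((k:ℝ)+δ)*(Dl:ℝ)/m)
      (by
        intro i hi
        rw [hinner, Finset.mem_filter] at hi
        exact ⟨hi.2.1, hi.2.2⟩)
      (by
        have hdiff : ((k:ℝ)+δ)*(Dl:ℝ)/m - (((k:ℝ)-δ)*(Dl:ℝ)/m) = 2*(δ*(Dl:ℝ)/m) := by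
          field_simp; ring
        have : (0:ℝ) ≤ δ*(Dl:ℝ)/m := by positivity
        linarith)
    have heq : ((k:ℝ)+δ)*(Dl:ℝ)/m - (((k:ℝ)-δ)*(Dl:ℝ)/m - 1) + 1 = 2*(δ*(Dl:ℝ)/m) + 2 := by
      field_simp
      ring
    rw [heq] at hb
    linarith
  have hKcard : (K.card : ℝ) ≤ 3 * ((m:ℝ) * len) := by
    have hb := card_int_le K ((m:ℝ)*A - δ) ((m:ℝ)*(A+len) + δ)
      (by
        intro k hk
        rw [hK, Finset.mem_Icc] at hk
        constructor
        · calc (m:ℝ)*A - δ ≤ (⌈(m:ℝ)*A - δ⌉ : ℝ) := Int.le_ceil _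
            _ ≤ (k:ℝ) := by exact_mod_cast hk.1
        · calc (k:ℝ) ≤ (⌊(m:ℝ)*(A+len) + δ⌋ : ℝ) := by exact_mod_cast hk.2
            _ ≤ (m:ℝ)*(A+len) + δ := Int.floor_le _)
      (by nlinarith)
    have heq : (m:ℝ)*(A+len) + δ - ((m:ℝ)*A - δ) + 1 = (m:ℝ)*len + 2*δ + 1 := by ring
    rw [heq] at hb
    linarith
  calc (((Finset.range Dl).filter _).card : ℝ)
      ≤ ((K.biUnion inner).card : ℝ) := by exact_mod_cast Finset.card_le_card hsub
    _ ≤ (∑ k ∈ K, ((inner k).card : ℝ)) := by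
        exact_mod_cast Finset.card_biUnion_le
    _ ≤ ∑ k ∈ K, 4 * (δ * (Dl:ℝ) / m) := Finset.sum_le_sum hinnercard
    _ = (K.card : ℝ) * (4 * (δ * (Dl:ℝ) / m)) := by rw [Finset.sum_const, nsmul_eq_mul]
    _ ≤ (3 * ((m:ℝ) * len)) * (4 * (δ * (Dl:ℝ) / m)) := by
        apply mul_le_mul_of_nonneg_right hKcard (by positivity)
    _ = 12 * δ * (Dl:ℝ) * len := by field_simp; ring
def childrenF (D : ℕ) (S : Finset ℕ) : Finset ℕ :=
  S.biUnion (fun p => (Finset.range D).image (fun r => p * D + r))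

def inWin (δ : ℝ) (n : ℕ → ℕ) (D : ℕ) (t j : ℕ) : Prop :=
  1 ≤ j ∧ δ * (D:ℝ)^t ≤ (n j : ℝ) ∧ ((n j : ℝ)) < δ * (D:ℝ)^(t+1)

def FF (δ : ℝ) (n : ℕ → ℕ) (D : ℕ) : ℕ → Finset ℕ
  | 0 => {0}
  | (t+1) => (childrenF D (FF δ n D t)).filter
      (fun i => ∀ j, inWin δ n D t j → ¬ meets δ (n j) ((D:ℝ)^(t+1)) i)

lemma child_div {D : ℕ} (hD : 0 < D) (p r : ℕ) (hr : r < D) : (p * D + r) / D = p := by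
  rw [mul_comm p D, Nat.add_comm, Nat.add_mul_div_left _ _ hD, Nat.div_eq_of_lt hr, Nat.zero_add]

lemma mem_childrenF {D : ℕ} {S : Finset ℕ} {i : ℕ} :
    i ∈ childrenF D S ↔ ∃ p ∈ S, ∃ r < D, i = p * D + r := by
  simp only [childrenF, Finset.mem_biUnion, Finset.mem_image, Finset.mem_range]
  constructor
  · rintro ⟨p, hp, r, hr, rfl⟩; exact ⟨p, hp, r, hr, rfl⟩
  · rintro ⟨p, hp, r, hr, rfl⟩; exact ⟨p, hp, r, hr, rfl⟩

lemma childrenF_div {D : ℕ} (hD : 0 < D) {S : Finset ℕ} {i : ℕ} (hi : i ∈ childrenF D S) :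
    i / D ∈ S := by
  rcases mem_childrenF.1 hi with ⟨p, hp, r, hr, rfl⟩
  rwa [child_div hD p r hr]

lemma childrenF_card {D : ℕ} (hD : 0 < D) (S : Finset ℕ) :
    (childrenF D S).card = D * S.card := by
  rw [childrenF, Finset.card_biUnion]
  · have : ∀ p : ℕ, ((Finset.range D).image (fun r => p * D + r)).card = D := by
      intro p
      rw [Finset.card_image_of_injective _ (fun a b h => by omega), Finset.card_range]
    simp only [this]
    rw [Finset.sum_const, smul_eq_mul, mul_comm]
  · intro p _ q _ hpq
    apply Finset.disjoint_left.2
    intro i hip hiq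
    rcases Finset.mem_image.1 hip with ⟨r, hr, rfl⟩
    rcases Finset.mem_image.1 hiq with ⟨r', hr', he⟩
    rw [Finset.mem_range] at hr hr'
    apply hpq
    have h1 := child_div hD p r hr
    have h2 := child_div hD q r' hr'
    rw [he, h1] at h2
    exact h2

lemma childrenF_sub_range {D : ℕ} {S : Finset ℕ} {B : ℕ} (hS : S ⊆ Finset.range B) :
    childrenF D S ⊆ Finset.range (B * D) := by
  intro i hi
  rcases mem_childrenF.1 hi with ⟨p, hp, r, hr, rfl⟩
  have hpB := Finset.mem_range.1 (hS hp)
  rw [Finset.mem_range]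
  calc p * D + r < p * D + D := by omega
    _ = (p + 1) * D := by ring
    _ ≤ B * D := Nat.mul_le_mul_right D (by omega)

lemma FF_sub_range (δ : ℝ) (n : ℕ → ℕ) (D : ℕ) : ∀ t, FF δ n D t ⊆ Finset.range (D^t)
  | 0 => by
    intro i hi
    simp only [FF, Finset.mem_singleton] at hi
    simp [hi]
  | (t+1) => by
    intro i hi
    have h1 : i ∈ childrenF D (FF δ n D t) := Finset.mem_of_mem_filter i hi
    have h2 := childrenF_sub_range (FF_sub_range δ n D t) h1
    rwa [← pow_succ] at h2

lemma FF_succ_sub (δ : ℝ) (n : ℕ → ℕ) (D : ℕ) (t : ℕ) :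
    FF δ n D (t+1) ⊆ childrenF D (FF δ n D t) := Finset.filter_subset _ _
def Wb (ε : ℝ) (D : ℕ) : ℕ := ⌈Real.log D / Real.log (1+ε)⌉₊

def winF (ε δ : ℝ) (n : ℕ → ℕ) (D t : ℕ) : Finset ℕ :=
  (Finset.range ((t+1) * Wb ε D + 2)).filter (fun j => inWin δ n D t j)

lemma Wb_le {ε : ℝ} {D : ℕ} (hlε0 : 0 < Real.log (1+ε)) (hD1 : (1:ℝ) ≤ (D:ℝ)) :
    ((Wb ε D : ℕ):ℝ) ≤ Real.log D / Real.log (1+ε) + 1 :=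
  (Nat.ceil_lt_add_one (div_nonneg (Real.log_nonneg hD1) hlε0.le)).le

section Win

variable {ε δ : ℝ} {n : ℕ → ℕ} {D : ℕ}

lemma lac_pow (hε0 : 0 < ε)
    (hlac : ∀ j, 1 ≤ j → (1 + ε) * (n j : ℝ) ≤ (n (j + 1) : ℝ)) :
    ∀ j m, 1 ≤ j → ((1+ε):ℝ)^m * (n j : ℝ) ≤ (n (j + m) : ℝ) := by
  intro j m hj
  induction m with
  | zero => simp
  | succ m ih =>
    have h1 := hlac (j + m) (by omega)
    calc ((1+ε):ℝ)^(m+1) * (n j : ℝ) = (1+ε) * ((1+ε)^m * (n j : ℝ)) := by ring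
      _ ≤ (1+ε) * (n (j+m) : ℝ) := by
          apply mul_le_mul_of_nonneg_left ih (by linarith)
      _ ≤ (n (j+m+1) : ℝ) := h1

lemma grow (hε0 : 0 < ε) (hn : ∀ j, 1 ≤ j → 0 < n j)
    (hlac : ∀ j, 1 ≤ j → (1 + ε) * (n j : ℝ) ≤ (n (j + 1) : ℝ)) :
    ∀ j, 1 ≤ j → ((1+ε):ℝ)^(j-1) ≤ (n j : ℝ) := by
  intro j hj
  have h := lac_pow hε0 hlac 1 (j-1) le_rfl
  have hadd : 1 + (j - 1) = j := by omega
  rw [hadd] at h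
  have h1 : (1:ℝ) ≤ (n 1 : ℝ) := by exact_mod_cast hn 1 le_rfl
  nlinarith [pow_pos (by linarith : (0:ℝ) < 1+ε) (j-1)]

lemma win_sep (hε0 : 0 < ε) (hδ0 : 0 < δ) (hD2 : 2 ≤ D) (hn : ∀ j, 1 ≤ j → 0 < n j)
    (hlac : ∀ j, 1 ≤ j → (1 + ε) * (n j : ℝ) ≤ (n (j + 1) : ℝ))
    {t j j' : ℕ} (h1 : inWin δ n D t j) (h2 : inWin δ n D t j') (hjj : j ≤ j') :
    j' - j ≤ Wb ε D := by
  obtain ⟨hj1, hjlo, _⟩ := h1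
  obtain ⟨hj'1, _, hj'hi⟩ := h2
  have hnj : (0:ℝ) < (n j : ℝ) := by exact_mod_cast hn j hj1
  have hD0 : (0:ℝ) < (D:ℝ) := by
    have : (2:ℝ) ≤ (D:ℝ) := by exact_mod_cast hD2
    linarith
  have hDt : (0:ℝ) < (D:ℝ)^t := pow_pos hD0 t
  have hpow : ((1+ε):ℝ)^(j'-j) * (n j : ℝ) ≤ (n j' : ℝ) := by
    have h := lac_pow hε0 hlac j (j'-j) hj1
    rwa [Nat.add_sub_cancel' hjj] at h
  have hlt : ((1+ε):ℝ)^(j'-j) < (D:ℝ) := by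
    have hc : (n j' : ℝ) < (D:ℝ) * (n j : ℝ) := by
      calc (n j' : ℝ) < δ * (D:ℝ)^(t+1) := hj'hi
        _ = (D:ℝ) * (δ * (D:ℝ)^t) := by ring
        _ ≤ (D:ℝ) * (n j : ℝ) := mul_le_mul_of_nonneg_left hjlo hD0.le
    nlinarith
  have hε1 : (0:ℝ) < Real.log (1+ε) := Real.log_pos (by linarith)
  have hlog := Real.log_lt_log (pow_pos (by linarith : (0:ℝ) < 1+ε) _) hlt
  rw [Real.log_pow] at hlog
  have hfin : ((j'-j : ℕ):ℝ) < Real.log D / Real.log (1+ε) := by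
    rw [lt_div_iff₀ hε1]
    exact_mod_cast hlog
  have h2 : ((j'-j : ℕ):ℝ) < ((Wb ε D : ℕ):ℝ) := lt_of_lt_of_le hfin (Nat.le_ceil _)
  exact_mod_cast h2.le

lemma win_bound (hε0 : 0 < ε) (hδ0 : 0 < δ) (hδ1 : δ ≤ 1) (hD2 : 2 ≤ D)
    (hn : ∀ j, 1 ≤ j → 0 < n j)
    (hlac : ∀ j, 1 ≤ j → (1 + ε) * (n j : ℝ) ≤ (n (j + 1) : ℝ))
    {t j : ℕ} (h : inWin δ n D t j) : j ∈ winF ε δ n D t := by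
  rw [winF, Finset.mem_filter, Finset.mem_range]
  refine ⟨?_, h⟩
  obtain ⟨hj1, hlo, hhi⟩ := h
  have hD0 : (0:ℝ) < (D:ℝ) := by
    have : (2:ℝ) ≤ (D:ℝ) := by exact_mod_cast hD2
    linarith
  have hg := grow hε0 hn hlac j hj1
  have hDt1 : (0:ℝ) < (D:ℝ)^(t+1) := pow_pos hD0 _
  have hnD : (n j : ℝ) < (D:ℝ)^(t+1) := by nlinarith
  have hε1 : (0:ℝ) < Real.log (1+ε) := Real.log_pos (by linarith)
  have hlt : ((1+ε):ℝ)^(j-1) < (D:ℝ)^(t+1) := lt_of_le_of_lt hg hnD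
  have hlog := Real.log_lt_log (pow_pos (by linarith : (0:ℝ) < 1+ε) _) hlt
  rw [Real.log_pow, Real.log_pow] at hlog
  have hWb : Real.log D ≤ ((Wb ε D : ℕ):ℝ) * Real.log (1+ε) := by
    rw [← div_le_iff₀ hε1]
    exact Nat.le_ceil _
  have hch : (((t+1) * Wb ε D : ℕ):ℝ) * Real.log (1+ε)
      = ((t+1:ℕ):ℝ) * (((Wb ε D : ℕ):ℝ) * Real.log (1+ε)) := by push_cast; ring
  have hlt2 : ((j-1:ℕ):ℝ) * Real.log (1+ε) < (((t+1) * Wb ε D : ℕ):ℝ) * Real.log (1+ε) := by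
    rw [hch]
    calc ((j-1:ℕ):ℝ) * Real.log (1+ε) < ((t+1:ℕ):ℝ) * Real.log D := by
          exact_mod_cast hlog
      _ ≤ ((t+1:ℕ):ℝ) * (((Wb ε D : ℕ):ℝ) * Real.log (1+ε)) := by
          apply mul_le_mul_of_nonneg_left hWb (by positivity)
  have hlt3 : ((j-1:ℕ):ℝ) < (((t+1) * Wb ε D : ℕ):ℝ) :=
    lt_of_mul_lt_mul_right (by linarith) hε1.le
  have : j - 1 < (t+1) * Wb ε D := by exact_mod_cast hlt3
  omega

lemma win_card (hε0 : 0 < ε) (hδ0 : 0 < δ) (hD2 : 2 ≤ D) (hn : ∀ j, 1 ≤ j → 0 < n j)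
    (hlac : ∀ j, 1 ≤ j → (1 + ε) * (n j : ℝ) ≤ (n (j + 1) : ℝ)) (t : ℕ) :
    (winF ε δ n D t).card ≤ Wb ε D + 1 := by
  rcases Finset.eq_empty_or_nonempty (winF ε δ n D t) with h | h
  · rw [h]; simp
  · set j₀ := (winF ε δ n D t).min' h with hj₀
    have hj₀mem : j₀ ∈ winF ε δ n D t := Finset.min'_mem _ h
    have hj₀win : inWin δ n D t j₀ := (Finset.mem_filter.1 hj₀mem).2
    have hsub : winF ε δ n D t ⊆ Finset.Icc j₀ (j₀ + Wb ε D) := by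
      intro j hj
      have hjwin : inWin δ n D t j := (Finset.mem_filter.1 hj).2
      have hle : j₀ ≤ j := Finset.min'_le _ _ hj
      have hsep := win_sep hε0 hδ0 hD2 hn hlac hj₀win hjwin hle
      rw [Finset.mem_Icc]
      omega
    calc (winF ε δ n D t).card ≤ (Finset.Icc j₀ (j₀ + Wb ε D)).card :=
          Finset.card_le_card hsub
      _ = Wb ε D + 1 := by rw [Nat.card_Icc]; omega

end Win
def badSet (δ : ℝ) (n : ℕ → ℕ) (D t : ℕ) : Finset ℕ :=
  (childrenF D (FF δ n D t)).filter
    (fun i => ¬ ∀ j, inWin δ n D t j → ¬ meets δ (n j) ((D:ℝ)^(t+1)) i)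

section Bad

variable {ε δ : ℝ} {n : ℕ → ℕ} {D : ℕ}

lemma FF_card_eq (hD : 0 < D) (t : ℕ) :
    (FF δ n D (t+1)).card + (badSet δ n D t).card = D * (FF δ n D t).card := by
  have h := Finset.card_filter_add_card_filter_not
    (s := childrenF D (FF δ n D t))
    (p := fun i => ∀ j, inWin δ n D t j → ¬ meets δ (n j) ((D:ℝ)^(t+1)) i)
  rw [← childrenF_card hD (FF δ n D t)]
  exact h

lemma badSet_sub (hε0 : 0 < ε) (hδ0 : 0 < δ) (hδ1 : δ ≤ 1) (hD2 : 2 ≤ D)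
    (hn : ∀ j, 1 ≤ j → 0 < n j)
    (hlac : ∀ j, 1 ≤ j → (1 + ε) * (n j : ℝ) ≤ (n (j + 1) : ℝ)) (t : ℕ) :
    badSet δ n D t ⊆ (winF ε δ n D t).biUnion
      (fun j => (childrenF D (FF δ n D t)).filter
        (fun i => meets δ (n j) ((D:ℝ)^(t+1)) i)) := by
  intro i hi
  rw [badSet, Finset.mem_filter] at hi
  obtain ⟨hic, hbad⟩ := hi
  push_neg at hbad
  obtain ⟨j, hjwin, hjmeets⟩ := hbad
  exact Finset.mem_biUnion.2 ⟨j, win_bound hε0 hδ0 hδ1 hD2 hn hlac hjwin,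
    Finset.mem_filter.2 ⟨hic, hjmeets⟩⟩

lemma bad_j_zero (hδ0 : 0 < δ) (hδh : δ ≤ 1/2) (hD2 : 2 ≤ D)
    (hn : ∀ j, 1 ≤ j → 0 < n j) {j : ℕ} (hjwin : inWin δ n D 0 j) :
    (((childrenF D (FF δ n D 0)).filter
        (fun i => meets δ (n j) ((D:ℝ)^(0+1)) i)).card : ℝ)
      ≤ 12 * δ * (D:ℝ) := by
  obtain ⟨hj1, hlo, hhi⟩ := hjwin
  have hm1 : 1 ≤ n j := hn j hj1
  have hm0 : (0:ℝ) < (n j : ℝ) := by exact_mod_cast hm1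
  have hD0 : (0:ℝ) < (D:ℝ) := by
    have : (2:ℝ) ≤ (D:ℝ) := by exact_mod_cast hD2
    linarith
  have hsub : (childrenF D (FF δ n D 0)).filter
      (fun i => meets δ (n j) ((D:ℝ)^(0+1)) i)
      ⊆ (Finset.range D).filter (fun i : ℕ => (0:ℝ) ≤ (i:ℝ)/(D:ℝ) ∧
          ((i:ℝ)+1)/(D:ℝ) ≤ 0 + 1 ∧ meets δ (n j) ((D:ℝ)) i) := by
    intro i hi
    rw [Finset.mem_filter] at hi
    obtain ⟨hic, hmeet⟩ := hi
    have hiR : i ∈ Finset.range D := by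
      have h1 : FF δ n D 0 ⊆ Finset.range (D^0) := FF_sub_range δ n D 0
      have h2 := childrenF_sub_range h1 hic
      simpa using h2
    have hiD := Finset.mem_range.1 hiR
    rw [Finset.mem_filter]
    refine ⟨hiR, by positivity, ?_, ?_⟩
    · rw [div_le_iff₀ hD0]
      have : (i:ℝ) + 1 ≤ (D:ℝ) := by exact_mod_cast Nat.succ_le_of_lt hiD
      linarith
    · rwa [pow_one] at hmeet
  have hcm := count_main δ hδ0 hδh (n j) D hm1 0 1
    (by rw [div_le_one hm0]; exact_mod_cast hm1)
    (by rw [pow_one] at hhi; linarith)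
  calc (((childrenF D (FF δ n D 0)).filter
        (fun i => meets δ (n j) ((D:ℝ)^(0+1)) i)).card : ℝ)
      ≤ _ := by exact_mod_cast Finset.card_le_card hsub
    _ ≤ 12 * δ * (D:ℝ) * 1 := hcm
    _ = 12 * δ * (D:ℝ) := by ring

lemma bad_j_succ (hδ0 : 0 < δ) (hδh : δ ≤ 1/2) (hD2 : 2 ≤ D) (hδD : 1 ≤ δ * D)
    (hn : ∀ j, 1 ≤ j → 0 < n j) {j τ : ℕ} (hjwin : inWin δ n D (τ+1) j) :
    (((childrenF D (FF δ n D (τ+1))).filter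
        (fun i => meets δ (n j) ((D:ℝ)^(τ+1+1)) i)).card : ℝ)
      ≤ 12 * δ * (D:ℝ)^2 * ((FF δ n D τ).card : ℝ) := by
  obtain ⟨hj1, hlo, hhi⟩ := hjwin
  have hm1 : 1 ≤ n j := hn j hj1
  have hm0 : (0:ℝ) < (n j : ℝ) := by exact_mod_cast hm1
  have hD0 : (0:ℝ) < (D:ℝ) := by
    have : (2:ℝ) ≤ (D:ℝ) := by exact_mod_cast hD2
    linarith
  have hDn0 : 0 < D := by exact_mod_cast hD2.trans_lt' (by norm_num)
  have hDτ : (0:ℝ) < (D:ℝ)^τ := pow_pos hD0 τ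
  have hcastDl : ((D^(τ+2) : ℕ) : ℝ) = (D:ℝ)^(τ+2) := by push_cast; ring
  set Bg : ℕ → Finset ℕ := fun g => (Finset.range (D^(τ+2))).filter
      (fun i : ℕ => (g:ℝ)/(D:ℝ)^τ ≤ (i:ℝ)/((D^(τ+2) : ℕ):ℝ) ∧
        ((i:ℝ)+1)/((D^(τ+2) : ℕ):ℝ) ≤ (g:ℝ)/(D:ℝ)^τ + 1/(D:ℝ)^τ ∧
        meets δ (n j) (((D^(τ+2) : ℕ):ℝ)) i) with hBg
  have hsub : (childrenF D (FF δ n D (τ+1))).filter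
      (fun i => meets δ (n j) ((D:ℝ)^(τ+1+1)) i)
      ⊆ (FF δ n D τ).biUnion Bg := by
    intro i hi
    rw [Finset.mem_filter] at hi
    obtain ⟨hic, hmeet⟩ := hi
    set g : ℕ := i / (D * D) with hg
    have hgmem : g ∈ FF δ n D τ := by
      have h1 : i / D ∈ FF δ n D (τ+1) := childrenF_div hDn0 hic
      have h2 : i / D ∈ childrenF D (FF δ n D τ) := FF_succ_sub δ n D τ h1
      have h3 : (i / D) / D ∈ FF δ n D τ := childrenF_div hDn0 h2
      rwa [Nat.div_div_eq_div_mul] at h3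
    have hiR : i ∈ Finset.range (D^(τ+2)) := by
      have h1 : FF δ n D (τ+1) ⊆ Finset.range (D^(τ+1)) := FF_sub_range δ n D (τ+1)
      have h2 := childrenF_sub_range h1 hic
      rwa [← pow_succ] at h2
    have hgi : g * (D * D) ≤ i := Nat.div_mul_le_self i (D*D)
    have hig : i < (g + 1) * (D * D) := by
      have h1 : 0 < D * D := by positivity
      have h2 := Nat.div_add_mod i (D*D)
      have h3 := Nat.mod_lt i h1
      calc i = D*D*g + i % (D*D) := by rw [hg]; omega
        _ < D*D*g + D*D := Nat.add_lt_add_left h3 _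
        _ = (g+1)*(D*D) := by ring
    have hgiR : ((g:ℝ) * ((D:ℝ) * (D:ℝ))) ≤ (i:ℝ) := by exact_mod_cast hgi
    have higR : (i:ℝ) < ((g:ℝ) + 1) * ((D:ℝ) * (D:ℝ)) := by exact_mod_cast hig
    have hpow : (D:ℝ)^(τ+2) = (D:ℝ)^τ * ((D:ℝ) * (D:ℝ)) := by ring
    refine Finset.mem_biUnion.2 ⟨g, hgmem, ?_⟩
    rw [hBg, Finset.mem_filter]
    refine ⟨hiR, ?_, ?_, ?_⟩
    · rw [hcastDl, div_le_div_iff₀ hDτ (pow_pos hD0 _), hpow]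
      nlinarith
    · have hig1 : i + 1 ≤ (g + 1) * (D * D) := Nat.succ_le_of_lt hig
      have hig1R : (i:ℝ) + 1 ≤ ((g:ℝ) + 1) * ((D:ℝ) * (D:ℝ)) := by exact_mod_cast hig1
      have hsum : (g:ℝ)/(D:ℝ)^τ + 1/(D:ℝ)^τ = ((g:ℝ)+1)/(D:ℝ)^τ := by
        rw [← add_div]
      rw [hcastDl, hsum, div_le_div_iff₀ (pow_pos hD0 _) hDτ, hpow]
      nlinarith [hDτ.le]
    · rw [hcastDl]
      exact hmeet
  have hcm : ∀ g ∈ FF δ n D τ, ((Bg g).card : ℝ)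
      ≤ 12 * δ * ((D^(τ+2) : ℕ):ℝ) * (1/(D:ℝ)^τ) := by
    intro g _
    apply count_main δ hδ0 hδh (n j) (D^(τ+2)) hm1 ((g:ℝ)/(D:ℝ)^τ) (1/(D:ℝ)^τ)
    · have hDn : (D:ℝ)^τ ≤ (n j : ℝ) := by
        have h1 : δ * (D:ℝ)^(τ+1) = (δ * D) * (D:ℝ)^τ := by ring
        nlinarith
      exact one_div_le_one_div_of_le hDτ hDn
    · rw [hcastDl]
      exact le_of_lt hhi
  calc (((childrenF D (FF δ n D (τ+1))).filter
        (fun i => meets δ (n j) ((D:ℝ)^(τ+1+1)) i)).card : ℝ)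
      ≤ (((FF δ n D τ).biUnion Bg).card : ℝ) := by
        exact_mod_cast Finset.card_le_card hsub
    _ ≤ ∑ g ∈ FF δ n D τ, ((Bg g).card : ℝ) := by exact_mod_cast Finset.card_biUnion_le
    _ ≤ ∑ g ∈ FF δ n D τ, 12 * δ * ((D^(τ+2) : ℕ):ℝ) * (1/(D:ℝ)^τ) :=
        Finset.sum_le_sum hcm
    _ = ((FF δ n D τ).card : ℝ) * (12 * δ * ((D^(τ+2) : ℕ):ℝ) * (1/(D:ℝ)^τ)) := by
        rw [Finset.sum_const, nsmul_eq_mul]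
    _ = 12 * δ * (D:ℝ)^2 * ((FF δ n D τ).card : ℝ) := by
        rw [hcastDl]
        have hne : (D:ℝ)^τ ≠ 0 := hDτ.ne'
        field_simp
        ring

end Bad
section Growth

variable {ε δ : ℝ} {n : ℕ → ℕ} {D : ℕ}

lemma bad_total_zero (hε0 : 0 < ε) (hδ0 : 0 < δ) (hδh : δ ≤ 1/2) (hD2 : 2 ≤ D)
    (hn : ∀ j, 1 ≤ j → 0 < n j)
    (hlac : ∀ j, 1 ≤ j → (1 + ε) * (n j : ℝ) ≤ (n (j + 1) : ℝ)) :
    ((badSet δ n D 0).card : ℝ) ≤ ((((Wb ε D) : ℕ):ℝ) + 1) * (12 * δ * D) := by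
  have hδ1 : δ ≤ 1 := by linarith
  have hD0 : (0:ℝ) ≤ (D:ℝ) := by positivity
  have hsub := badSet_sub hε0 hδ0 hδ1 hD2 hn hlac (t := 0) (ε := ε)
  calc ((badSet δ n D 0).card : ℝ)
      ≤ (((winF ε δ n D 0).biUnion
          (fun j => (childrenF D (FF δ n D 0)).filter
            (fun i => meets δ (n j) ((D:ℝ)^(0+1)) i))).card : ℝ) := by
        exact_mod_cast Finset.card_le_card hsub
    _ ≤ ∑ j ∈ winF ε δ n D 0, (((childrenF D (FF δ n D 0)).filter
          (fun i => meets δ (n j) ((D:ℝ)^(0+1)) i)).card : ℝ) := by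
        exact_mod_cast Finset.card_biUnion_le
    _ ≤ ∑ _j ∈ winF ε δ n D 0, 12 * δ * (D:ℝ) := by
        apply Finset.sum_le_sum
        intro j hj
        exact bad_j_zero hδ0 hδh hD2 hn (Finset.mem_filter.1 hj).2
    _ = ((winF ε δ n D 0).card : ℝ) * (12 * δ * (D:ℝ)) := by
        rw [Finset.sum_const, nsmul_eq_mul]
    _ ≤ ((((Wb ε D) : ℕ):ℝ) + 1) * (12 * δ * D) := by
        apply mul_le_mul_of_nonneg_right ?_ (by positivity)
        have := win_card hε0 hδ0 hD2 hn hlac (δ := δ) (t := 0)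
        push_cast
        exact_mod_cast this

lemma bad_total_succ (hε0 : 0 < ε) (hδ0 : 0 < δ) (hδh : δ ≤ 1/2) (hD2 : 2 ≤ D)
    (hδD : 1 ≤ δ * D) (hn : ∀ j, 1 ≤ j → 0 < n j)
    (hlac : ∀ j, 1 ≤ j → (1 + ε) * (n j : ℝ) ≤ (n (j + 1) : ℝ)) (τ : ℕ) :
    ((badSet δ n D (τ+1)).card : ℝ)
      ≤ ((((Wb ε D) : ℕ):ℝ) + 1) * (12 * δ * (D:ℝ)^2 * ((FF δ n D τ).card : ℝ)) := by
  have hδ1 : δ ≤ 1 := by linarith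
  have hsub := badSet_sub hε0 hδ0 hδ1 hD2 hn hlac (t := τ+1) (ε := ε)
  calc ((badSet δ n D (τ+1)).card : ℝ)
      ≤ (((winF ε δ n D (τ+1)).biUnion
          (fun j => (childrenF D (FF δ n D (τ+1))).filter
            (fun i => meets δ (n j) ((D:ℝ)^(τ+1+1)) i))).card : ℝ) := by
        exact_mod_cast Finset.card_le_card hsub
    _ ≤ ∑ j ∈ winF ε δ n D (τ+1), (((childrenF D (FF δ n D (τ+1))).filter
          (fun i => meets δ (n j) ((D:ℝ)^(τ+1+1)) i)).card : ℝ) := by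
        exact_mod_cast Finset.card_biUnion_le
    _ ≤ ∑ _j ∈ winF ε δ n D (τ+1), 12 * δ * (D:ℝ)^2 * ((FF δ n D τ).card : ℝ) := by
        apply Finset.sum_le_sum
        intro j hj
        exact bad_j_succ hδ0 hδh hD2 hδD hn (Finset.mem_filter.1 hj).2
    _ = ((winF ε δ n D (τ+1)).card : ℝ) * (12 * δ * (D:ℝ)^2 * ((FF δ n D τ).card : ℝ)) := by
        rw [Finset.sum_const, nsmul_eq_mul]
    _ ≤ ((((Wb ε D) : ℕ):ℝ) + 1) * (12 * δ * (D:ℝ)^2 * ((FF δ n D τ).card : ℝ)) := by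
        apply mul_le_mul_of_nonneg_right ?_ (by positivity)
        have := win_card hε0 hδ0 hD2 hn hlac (δ := δ) (t := τ+1)
        push_cast
        exact_mod_cast this

lemma FF_growth (hε0 : 0 < ε) (hδ0 : 0 < δ) (hδh : δ ≤ 1/2) (hD2 : 2 ≤ D)
    (hδD : 1 ≤ δ * D)
    (hkey : 12 * ((((Wb ε D) : ℕ):ℝ) + 1) * δ ≤ 1/4)
    (hn : ∀ j, 1 ≤ j → 0 < n j)
    (hlac : ∀ j, 1 ≤ j → (1 + ε) * (n j : ℝ) ≤ (n (j + 1) : ℝ)) :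
    ∀ t, ((D:ℝ)/2) * ((FF δ n D t).card : ℝ) ≤ ((FF δ n D (t+1)).card : ℝ) := by
  have hDn0 : 0 < D := by omega
  have hD0 : (0:ℝ) < (D:ℝ) := by exact_mod_cast hDn0
  have hW0 : (0:ℝ) ≤ (((Wb ε D) : ℕ):ℝ) + 1 := by positivity
  intro t
  induction t with
  | zero =>
    have hcard0 : (FF δ n D 0).card = 1 := by simp [FF]
    have heq := FF_card_eq (δ := δ) (n := n) hDn0 0
    rw [hcard0] at heq
    norm_num at heq
    have heqR : ((FF δ n D 1).card : ℝ) + ((badSet δ n D 0).card : ℝ) = (D:ℝ) := by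
      exact_mod_cast heq
    have hbad := bad_total_zero hε0 hδ0 hδh hD2 hn hlac (ε := ε)
    have hb2 : ((((Wb ε D) : ℕ):ℝ) + 1) * (12 * δ * D) ≤ (1/4) * D := by
      have := mul_le_mul_of_nonneg_right hkey hD0.le
      calc ((((Wb ε D) : ℕ):ℝ) + 1) * (12 * δ * D)
          = (12 * ((((Wb ε D) : ℕ):ℝ) + 1) * δ) * D := by ring
        _ ≤ (1/4) * D := this
    rw [hcard0]
    push_cast
    linarith
  | succ τ ih =>
    have heq := FF_card_eq (δ := δ) (n := n) hDn0 (τ+1)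
    have heqR : ((FF δ n D (τ+1+1)).card : ℝ) + ((badSet δ n D (τ+1)).card : ℝ)
        = (D:ℝ) * ((FF δ n D (τ+1)).card : ℝ) := by
      exact_mod_cast heq
    have hbad := bad_total_succ hε0 hδ0 hδh hD2 hδD hn hlac (ε := ε) τ
    have haτ : (0:ℝ) ≤ ((FF δ n D τ).card : ℝ) := by positivity
    have hb2 : ((((Wb ε D) : ℕ):ℝ) + 1) * (12 * δ * (D:ℝ)^2 * ((FF δ n D τ).card : ℝ))
        ≤ ((D:ℝ)/2) * (((D:ℝ)/2) * ((FF δ n D τ).card : ℝ)) := by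
      have h1 : (0:ℝ) ≤ (D:ℝ)^2 * ((FF δ n D τ).card : ℝ) := by positivity
      have h2 := mul_le_mul_of_nonneg_right hkey h1
      calc ((((Wb ε D) : ℕ):ℝ) + 1) * (12 * δ * (D:ℝ)^2 * ((FF δ n D τ).card : ℝ))
          = (12 * ((((Wb ε D) : ℕ):ℝ) + 1) * δ) * ((D:ℝ)^2 * ((FF δ n D τ).card : ℝ)) := by
            ring
        _ ≤ (1/4) * ((D:ℝ)^2 * ((FF δ n D τ).card : ℝ)) := h2
        _ = ((D:ℝ)/2) * (((D:ℝ)/2) * ((FF δ n D τ).card : ℝ)) := by ring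
    have hb3 : ((badSet δ n D (τ+1)).card : ℝ) ≤ ((D:ℝ)/2) * ((FF δ n D (τ+1)).card : ℝ) := by
      calc ((badSet δ n D (τ+1)).card : ℝ)
          ≤ ((((Wb ε D) : ℕ):ℝ) + 1) * (12 * δ * (D:ℝ)^2 * ((FF δ n D τ).card : ℝ)) := hbad
        _ ≤ ((D:ℝ)/2) * (((D:ℝ)/2) * ((FF δ n D τ).card : ℝ)) := hb2
        _ ≤ ((D:ℝ)/2) * ((FF δ n D (τ+1)).card : ℝ) := by
            apply mul_le_mul_of_nonneg_left ih (by positivity)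
    linarith

lemma FF_pos (hε0 : 0 < ε) (hδ0 : 0 < δ) (hδh : δ ≤ 1/2) (hD2 : 2 ≤ D)
    (hδD : 1 ≤ δ * D)
    (hkey : 12 * ((((Wb ε D) : ℕ):ℝ) + 1) * δ ≤ 1/4)
    (hn : ∀ j, 1 ≤ j → 0 < n j)
    (hlac : ∀ j, 1 ≤ j → (1 + ε) * (n j : ℝ) ≤ (n (j + 1) : ℝ)) :
    ∀ t, 0 < (FF δ n D t).card := by
  have hD0 : (0:ℝ) < (D:ℝ) := by
    have : (2:ℝ) ≤ (D:ℝ) := by exact_mod_cast hD2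
    linarith
  intro t
  induction t with
  | zero => simp [FF]
  | succ τ ih =>
    have hg := FF_growth hε0 hδ0 hδh hD2 hδD hkey hn hlac (ε := ε) τ
    have h1 : (0:ℝ) < ((FF δ n D τ).card : ℝ) := by exact_mod_cast ih
    have : (0:ℝ) < ((FF δ n D (τ+1)).card : ℝ) := by nlinarith
    exact_mod_cast this

end Growth
def cellI (D t i : ℕ) : Set ℝ := Set.Icc ((i:ℝ)/(D:ℝ)^t) (((i:ℝ)+1)/(D:ℝ)^t)

def KK (δ : ℝ) (n : ℕ → ℕ) (D t : ℕ) : Set ℝ := ⋃ i ∈ FF δ n D t, cellI D t i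

section Cantor

variable {ε δ : ℝ} {n : ℕ → ℕ} {D : ℕ}

lemma KK_closed (t : ℕ) : IsClosed (KK δ n D t) := by
  apply Set.Finite.isClosed_biUnion (Finset.finite_toSet _)
  intro i _
  exact isClosed_Icc

lemma KK_compact (t : ℕ) : IsCompact (KK δ n D t) := by
  apply Set.Finite.isCompact_biUnion (Finset.finite_toSet _)
  intro i _
  exact isCompact_Icc

lemma KK_nonempty (hD2 : 2 ≤ D) (hpos : 0 < (FF δ n D t).card) : (KK δ n D t).Nonempty := by
  have hD0 : (0:ℝ) < (D:ℝ) := by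
    have : (2:ℝ) ≤ (D:ℝ) := by exact_mod_cast hD2
    linarith
  obtain ⟨i, hi⟩ := Finset.card_pos.1 hpos
  refine ⟨(i:ℝ)/(D:ℝ)^t, Set.mem_biUnion hi ?_⟩
  rw [cellI, Set.mem_Icc]
  have hDt : (0:ℝ) < (D:ℝ)^t := pow_pos hD0 t
  constructor
  · exact le_refl _
  · exact (div_le_div_iff_of_pos_right hDt).2 (by linarith)

lemma KK_nested (hD2 : 2 ≤ D) (t : ℕ) : KK δ n D (t+1) ⊆ KK δ n D t := by
  have hDn0 : 0 < D := by omega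
  have hD0 : (0:ℝ) < (D:ℝ) := by
    have : (2:ℝ) ≤ (D:ℝ) := by exact_mod_cast hD2
    linarith
  have hDt : (0:ℝ) < (D:ℝ)^t := pow_pos hD0 t
  have hDt1 : (0:ℝ) < (D:ℝ)^(t+1) := pow_pos hD0 (t+1)
  intro x hx
  rw [KK, Set.mem_iUnion₂] at hx
  obtain ⟨i, hiF, hxc⟩ := hx
  have hic : i ∈ childrenF D (FF δ n D t) := FF_succ_sub δ n D t hiF
  rcases mem_childrenF.1 hic with ⟨p, hp, r, hr, rfl⟩
  rw [cellI, Set.mem_Icc] at hxc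
  apply Set.mem_biUnion hp
  rw [cellI, Set.mem_Icc]
  have hcast1 : ((p * D + r : ℕ):ℝ) = (p:ℝ) * D + r := by push_cast; ring
  have hpow : (D:ℝ)^(t+1) = (D:ℝ)^t * D := by ring
  have hr0 : (0:ℝ) ≤ (r:ℝ) := by positivity
  have hrR : (r:ℝ) + 1 ≤ (D:ℝ) := by exact_mod_cast Nat.succ_le_of_lt hr
  constructor
  · have hle : (p:ℝ)/(D:ℝ)^t ≤ ((p * D + r : ℕ):ℝ)/(D:ℝ)^(t+1) := by
      rw [hcast1, hpow, div_le_div_iff₀ hDt (by positivity)]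
      nlinarith [hDt.le, mul_nonneg hr0 hDt.le]
    exact hle.trans hxc.1
  · have hge : (((p * D + r : ℕ):ℝ) + 1)/(D:ℝ)^(t+1) ≤ ((p:ℝ) + 1)/(D:ℝ)^t := by
      rw [hcast1, hpow, div_le_div_iff₀ (by positivity) hDt]
      nlinarith [hDt.le, mul_le_mul_of_nonneg_right hrR hDt.le]
    exact hxc.2.trans hge

lemma exists_good_x (hε0 : 0 < ε) (hδ0 : 0 < δ) (hδh : δ ≤ 1/2) (hD2 : 2 ≤ D)
    (hδD : 1 ≤ δ * D) (hDδ : (2:ℝ)/δ ≤ (D:ℝ))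
    (hkey : 12 * ((((Wb ε D) : ℕ):ℝ) + 1) * δ ≤ 1/4)
    (hn : ∀ j, 1 ≤ j → 0 < n j)
    (hlac : ∀ j, 1 ≤ j → (1 + ε) * (n j : ℝ) ≤ (n (j + 1) : ℝ)) :
    ∃ x : ℝ, ∀ j, 1 ≤ j → ∀ k : ℤ, δ ≤ |(n j : ℝ) * x - (k:ℝ)| := by
  have hδ1 : δ ≤ 1 := by linarith
  have hpos := FF_pos hε0 hδ0 hδh hD2 hδD hkey hn hlac (ε := ε)
  have hne : ∀ t, (KK δ n D t).Nonempty := fun t => KK_nonempty hD2 (hpos t)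
  obtain ⟨x, hx⟩ := IsCompact.nonempty_iInter_of_sequence_nonempty_isCompact_isClosed
    (KK δ n D) (KK_nested hD2) hne (KK_compact 0) KK_closed
  rw [Set.mem_iInter] at hx
  refine ⟨x, ?_⟩
  intro j hj k
  -- find the window of j
  have hnj1 : 1 ≤ n j := hn j hj
  have hnjR : (1:ℝ) ≤ (n j : ℝ) := by exact_mod_cast hnj1
  have hnj0 : (0:ℝ) < (n j : ℝ) := by linarith
  set P : ℕ → Prop := fun s => δ * (D:ℝ)^s ≤ (n j : ℝ) with hP
  have hP0 : P 0 := by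
    rw [hP]
    simp only [pow_zero, mul_one]
    linarith
  have hPtop : ¬ P (n j) := by
    rw [hP]
    simp only [not_le]
    have h2s : ((n j : ℕ):ℝ) < (2:ℝ)^(n j) := by
      have := Nat.lt_two_pow_self (n := n j)
      exact_mod_cast this
    have hpow2 : (2:ℝ)^(n j) ≤ δ * (D:ℝ)^(n j) := by
      have h1 : ((2:ℝ)/δ)^(n j) ≤ (D:ℝ)^(n j) :=
        pow_le_pow_left₀ (by positivity) hDδ (n j)
      have h2 : ((2:ℝ)/δ)^(n j) = (2:ℝ)^(n j)/δ^(n j) := div_pow 2 δ (n j)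
      have h3 : δ^(n j) ≤ δ := by
        simpa using pow_le_pow_of_le_one hδ0.le hδ1 hnj1
      have h4 : (0:ℝ) < δ^(n j) := pow_pos hδ0 (n j)
      calc (2:ℝ)^(n j) = δ^(n j) * ((2:ℝ)^(n j)/δ^(n j)) := by field_simp
        _ ≤ δ * ((2:ℝ)^(n j)/δ^(n j)) := by
            apply mul_le_mul_of_nonneg_right h3 (by positivity)
        _ = δ * ((2:ℝ)/δ)^(n j) := by rw [h2]
        _ ≤ δ * (D:ℝ)^(n j) := mul_le_mul_of_nonneg_left h1 hδ0.le
    linarith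
  set t : ℕ := Nat.findGreatest P (n j) with ht
  have hPt : P t := Nat.findGreatest_spec (Nat.zero_le _) hP0
  have htle : t ≤ n j := Nat.findGreatest_le (n j)
  have htlt : t < n j := lt_of_le_of_ne htle (fun h => hPtop (h ▸ hPt))
  have hnPt1 : ¬ P (t+1) := by
    apply Nat.findGreatest_is_greatest
    · rw [← ht]; omega
    · omega
  have hwin : inWin δ n D t j := ⟨hj, hPt, not_le.1 hnPt1⟩
  -- x is in KK (t+1)
  have hxt := hx (t+1)
  rw [KK, Set.mem_iUnion₂] at hxt
  obtain ⟨i, hiF, hxc⟩ := hxt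
  have hfor := (Finset.mem_filter.1 hiF).2
  have hnm : ¬ meets δ (n j) ((D:ℝ)^(t+1)) i := hfor j hwin
  rw [meets] at hnm
  push_neg at hnm
  by_contra habs
  push_neg at habs
  have h1 : (k:ℝ) - δ < (n j : ℝ) * x := by
    have := abs_lt.1 habs
    linarith [this.1]
  have h2 : (n j : ℝ) * x < (k:ℝ) + δ := by
    have := abs_lt.1 habs
    linarith [this.2]
  rw [cellI, Set.mem_Icc] at hxc
  have hx1a : x ≤ ((k:ℝ) + δ)/(n j : ℝ) := by
    rw [le_div_iff₀ hnj0]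
    nlinarith
  have hx1 : (i:ℝ)/(D:ℝ)^(t+1) ≤ ((k:ℝ) + δ)/(n j : ℝ) := hxc.1.trans hx1a
  have hx2a : ((k:ℝ) - δ)/(n j : ℝ) ≤ x := by
    rw [div_le_iff₀ hnj0]
    nlinarith
  have hx2 : ((k:ℝ) - δ)/(n j : ℝ) ≤ ((i:ℝ)+1)/(D:ℝ)^(t+1) := hx2a.trans hxc.2
  exact absurd hx2 (not_le.2 (hnm k hx1))

end Cantor
end LacunaryAux

end

set_option maxHeartbeats 1000000 in
open LacunaryAux in
/-- There is a universal constant `c > 0` such that for every lacunary sequence `(n j)`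
with ratio `1 + ε` (`0 < ε < 1/4`) there is a set `A ⊆ ℤ` of upper density at least
`c * ε * |log ε|⁻¹` whose difference set avoids `{n j : j ≥ 1}`. -/
theorem lacunary_not_intersective :
    ∃ c : ℝ, 0 < c ∧
      ∀ ε : ℝ, 0 < ε → ε < 1 / 4 →
        ∀ n : ℕ → ℕ, (∀ j, 1 ≤ j → 0 < n j) →
          (∀ j, 1 ≤ j → (1 + ε) * (n j : ℝ) ≤ (n (j + 1) : ℝ)) →
          ∃ A : Set ℤ,
            (c * ε * |Real.log ε|⁻¹ ≤
              Filter.limsup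
                (fun N : ℕ =>
                  ((A ∩ Set.Icc (-(N : ℤ)) (N : ℤ)).ncard : ℝ) / (2 * N + 1))
                Filter.atTop) ∧
            (∀ a ∈ A, ∀ b ∈ A, ∀ j, 1 ≤ j → a - b ≠ (n j : ℤ)) := by
  refine ⟨1/32768, by norm_num, ?_⟩
  intro ε hε0 hε4 n hn hlac
  -- basic log facts
  have hεlt1 : ε < 1 := by linarith
  have hlogneg : Real.log ε < 0 := Real.log_neg hε0 hεlt1
  set L : ℝ := -Real.log ε with hLdef
  have hL0 : 0 < L := by rw [hLdef]; linarith
  have hlog2ub : Real.log 2 < 0.6931471808 := Real.log_two_lt_d9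
  have hlog2lb : (0.6931471803 : ℝ) < Real.log 2 := by
    have := Real.log_two_gt_d9
    linarith
  have hlog4 : Real.log 4 = 2 * Real.log 2 := by
    rw [show (4:ℝ) = 2^2 by norm_num, Real.log_pow]
    push_cast; ring
  have hL4 : Real.log 4 < L := by
    have h1 : Real.log ε < Real.log (1/4) := Real.log_lt_log hε0 hε4
    have h2 : Real.log (1/4) = - Real.log 4 := by
      rw [one_div, Real.log_inv]
    rw [hLdef]
    linarith
  have hL138 : (1.38 : ℝ) < L := by
    have : (1.38:ℝ) < 2 * Real.log 2 := by linarith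
    linarith [hlog4 ▸ hL4]
  -- define δ and D
  set δ : ℝ := ε / (1024 * L) with hδdef
  have hδ0 : 0 < δ := by rw [hδdef]; positivity
  have hδsmall : δ ≤ 1/4096 := by
    rw [hδdef, div_le_div_iff₀ (by positivity) (by norm_num)]
    nlinarith
  have hδh : δ ≤ 1/2 := by linarith
  have hδ1 : δ ≤ 1 := by linarith
  set D : ℕ := ⌈(2:ℝ)/δ⌉₊ with hDdef
  have hDlb : (2:ℝ)/δ ≤ (D:ℝ) := Nat.le_ceil _
  have hDub : (D:ℝ) ≤ 2/δ + 1 := by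
    rw [hDdef]
    exact (Nat.ceil_lt_add_one (by positivity)).le
  have hinvδ : (8192:ℝ) ≤ 2/δ := by
    rw [le_div_iff₀ hδ0]
    linarith
  have hDR2 : (2:ℝ) ≤ (D:ℝ) := by linarith
  have hD2 : 2 ≤ D := by exact_mod_cast hDR2
  have hδD : 1 ≤ δ * (D:ℝ) := by
    have : δ * (2/δ) ≤ δ * D := mul_le_mul_of_nonneg_left hDlb hδ0.le
    have h2 : δ * (2/δ) = 2 := by field_simp
    linarith
  clear_value L δ D
  -- the key numerical estimate
  have hlogD : Real.log D ≤ 8 * L := by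
    have hD3 : (D:ℝ) ≤ 3/δ := by
      have ha : (1:ℝ) ≤ 1/δ := by
        rw [le_div_iff₀ hδ0]; linarith
      have hb : 2/δ + 1/δ = 3/δ := by ring
      linarith
    have h1 : Real.log D ≤ Real.log (3/δ) := by
      apply Real.log_le_log (by positivity)
      exact hD3
    have h2 : Real.log (3/δ) = Real.log 3 - Real.log δ := by
      rw [Real.log_div (by norm_num) hδ0.ne']
    have h3 : Real.log δ = Real.log ε - Real.log (1024 * L) := by
      rw [hδdef, Real.log_div hε0.ne' (by positivity)]
    have h4 : Real.log (1024 * L) = Real.log 1024 + Real.log L := by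
      rw [Real.log_mul (by norm_num) hL0.ne']
    have h5 : Real.log 1024 = 10 * Real.log 2 := by
      rw [show (1024:ℝ) = 2^10 by norm_num, Real.log_pow]
      push_cast; ring
    have h6 : Real.log L ≤ L - 1 := Real.log_le_sub_one_of_pos hL0
    have h7 : Real.log 3 ≤ 2 * Real.log 2 := by
      have := Real.log_le_log (by norm_num : (0:ℝ) < 3) (by norm_num : (3:ℝ) ≤ 4)
      linarith [hlog4]
    have h8 : Real.log ε = -L := by rw [hLdef]; ring
    calc Real.log D ≤ Real.log 3 - Real.log δ := by linarith
      _ = Real.log 3 - Real.log ε + Real.log 1024 + Real.log L := by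
          rw [h3, h4]; ring
      _ ≤ 2 * Real.log 2 + L + 10 * Real.log 2 + (L - 1) := by
          rw [h8]; linarith
      _ ≤ 8 * L := by nlinarith
  have hlog1ε : (4/5) * ε ≤ Real.log (1+ε) := by
    have h1 : Real.log (1+ε)⁻¹ ≤ (1+ε)⁻¹ - 1 :=
      Real.log_le_sub_one_of_pos (by positivity)
    rw [Real.log_inv] at h1
    have h2 : (1:ℝ) - (1+ε)⁻¹ ≤ Real.log (1+ε) := by linarith
    have h3 : (4/5) * ε ≤ 1 - (1+ε)⁻¹ := by
      have hpos : (0:ℝ) < 1 + ε := by linarith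
      have he : 1 - (1+ε)⁻¹ = ε/(1+ε) := by field_simp; ring
      rw [he, le_div_iff₀ hpos]
      nlinarith
    linarith
  have hkey : 12 * ((((Wb ε D) : ℕ):ℝ) + 1) * δ ≤ 1/4 := by
    have hlε0 : (0:ℝ) < Real.log (1+ε) := Real.log_pos (by linarith)
    have hW : ((Wb ε D : ℕ):ℝ) ≤ Real.log D / Real.log (1+ε) + 1 :=
      Wb_le hlε0 (by linarith : (1:ℝ) ≤ (D:ℝ))
    have hq : Real.log D / Real.log (1+ε) ≤ (8*L) / ((4/5)*ε) := by
      apply div_le_div₀ (by positivity) hlogD (by positivity) hlog1ε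
    have hq2 : (8*L) / ((4/5)*ε) = 10 * L / ε := by
      field_simp
      ring
    have hδLε : δ * (L / ε) = 1/1024 := by
      rw [hδdef]
      field_simp
    have hW2 : ((Wb ε D : ℕ):ℝ) + 1 ≤ 10 * L / ε + 2 := by
      rw [hq2] at hq
      linarith
    have hfin : 12 * (10 * L / ε + 2) * δ ≤ 1/4 := by
      have e1 : 12 * (10 * L / ε + 2) * δ = 120 * (δ * (L/ε)) + 24 * δ := by ring
      rw [e1, hδLε]
      linarith
    have hmono : 12 * ((((Wb ε D) : ℕ):ℝ) + 1) * δ ≤ 12 * (10 * L / ε + 2) * δ := by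
      apply mul_le_mul_of_nonneg_right _ hδ0.le
      apply mul_le_mul_of_nonneg_left hW2 (by norm_num)
    linarith
  -- get the good point
  obtain ⟨x, hgood⟩ := exists_good_x (ε := ε) (δ := δ) (n := n) (D := D)
    hε0 hδ0 hδh hD2 hδD hDlb hkey hn hlac
  refine ⟨Aset δ x, ?_, ?_⟩
  · have hlim := limsup_density δ x hδ0 hδh
    have heq : (1/32768 : ℝ) * ε * |Real.log ε|⁻¹ = δ / 32 := by
      rw [abs_of_neg hlogneg, ← hLdef, hδdef]
      rw [div_div]
      rw [show (1024 * L * 32 : ℝ) = 32768 * L by ring]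
      rw [div_eq_mul_inv ε (32768*L), mul_inv]
      ring
    rw [heq]
    exact hlim
  · intro a ha b hb j hj heq
    obtain ⟨k, hk⟩ := Aset_diff ha hb
    have hcast : ((a:ℝ) - (b:ℝ)) = ((n j : ℕ):ℝ) := by
      have h : ((a - b : ℤ):ℝ) = (((n j : ℤ)):ℝ) := by rw [heq]
      push_cast at h
      linarith
    rw [hcast] at hk
    exact absurd hk (not_lt.2 (hgood j hj k))
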